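/- For every finite positive Radon Borel measure ν on K there exists a minimal finite positive Radon Borel measure μ on K with μ ≼ ν. -/

import Mathlib

set_option linter.unusedSectionVars false

open MeasureTheory NNReal BoundedContinuousFunction Set TopologicalSpace

section Generic
variable {X : Type*} [TopologicalSpace X] [CompactSpace X] [T2Space X]

/-- Coerce a bounded continuous `ℝ≥0`-valued function to a real-valued one. -/
noncomputable def toR (f : X →ᵇ ℝ≥0) : X →ᵇ ℝ :=
  BoundedContinuousFunction.comp _ (isometry_subtype_coe.lipschitz) f

@[simp] lemma toR_apply (f : X →ᵇ ℝ≥0) (x : X) : toR f x = (f x : ℝ) := rfl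

lemma toR_add (f g : X →ᵇ ℝ≥0) : toR (f + g) = toR f + toR g := by
  ext x
  show (((f + g) x : ℝ≥0) : ℝ) = (f x : ℝ) + (g x : ℝ)
  rw [BoundedContinuousFunction.add_apply]; push_cast; ring

lemma toR_smul (c : ℝ≥0) (f : X →ᵇ ℝ≥0) : toR (c • f) = (c : ℝ) • toR f := by
  ext x
  show (((c • f) x : ℝ≥0) : ℝ) = (c : ℝ) • ((f x : ℝ≥0) : ℝ)
  rw [BoundedContinuousFunction.coe_smul]; simp [NNReal.smul_def]

lemma toR_one : toR (1 : X →ᵇ ℝ≥0) = 1 := by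
  ext x
  show (((1 : X →ᵇ ℝ≥0) x : ℝ≥0) : ℝ) = 1
  simp

lemma toR_nonneg (f : X →ᵇ ℝ≥0) (x : X) : 0 ≤ toR f x := (f x).coe_nonneg

/-- Make a bounded continuous `ℝ≥0`-valued function from a continuous function on a
compact space. -/
noncomputable def bcnn (φ : X → ℝ≥0) (hφ : Continuous φ) : X →ᵇ ℝ≥0 :=
  BoundedContinuousFunction.mkOfCompact ⟨φ, hφ⟩

@[simp] lemma bcnn_apply (φ : X → ℝ≥0) (hφ : Continuous φ) (x : X) : bcnn φ hφ x = φ x := rfl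

end Generic

section OldRiesz
variable {X : Type*} [TopologicalSpace X]

/-- Riesz content for functionals on bounded continuous functions. -/
noncomputable def rieszContentAux' (Λ : (X →ᵇ ℝ≥0) →ₗ[ℝ≥0] ℝ≥0) : Compacts X → ℝ≥0 := fun K =>
  sInf (Λ '' { f : X →ᵇ ℝ≥0 | ∀ x ∈ K, (1 : ℝ≥0) ≤ f x })

theorem rieszContentAux'_image_nonempty (Λ : (X →ᵇ ℝ≥0) →ₗ[ℝ≥0] ℝ≥0) (K : Compacts X) :
    (Λ '' { f : X →ᵇ ℝ≥0 | ∀ x ∈ K, (1 : ℝ≥0) ≤ f x }).Nonempty :=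
  ⟨Λ 1, 1, fun _ _ => le_rfl, rfl⟩

theorem rieszContentAux'_mono (Λ : (X →ᵇ ℝ≥0) →ₗ[ℝ≥0] ℝ≥0) {K₁ K₂ : Compacts X} (h : K₁ ≤ K₂) :
    rieszContentAux' Λ K₁ ≤ rieszContentAux' Λ K₂ :=
  csInf_le_csInf (OrderBot.bddBelow _) (rieszContentAux'_image_nonempty Λ K₂)
    (Set.image_mono (fun _ hf x hx => hf x (h hx)))

theorem rieszContentAux'_le (Λ : (X →ᵇ ℝ≥0) →ₗ[ℝ≥0] ℝ≥0) {K : Compacts X} {f : X →ᵇ ℝ≥0}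
    (h : ∀ x ∈ K, (1 : ℝ≥0) ≤ f x) : rieszContentAux' Λ K ≤ Λ f :=
  csInf_le (OrderBot.bddBelow _) ⟨f, h, rfl⟩

theorem rieszContentAux'_sup_le (Λ : (X →ᵇ ℝ≥0) →ₗ[ℝ≥0] ℝ≥0) (K1 K2 : Compacts X) :
    rieszContentAux' Λ (K1 ⊔ K2) ≤ rieszContentAux' Λ K1 + rieszContentAux' Λ K2 := by
  rw [← NNReal.coe_le_coe, NNReal.coe_add]
  refine _root_.le_of_forall_pos_lt_add (fun ε' εpos' => ?_)
  set ε : ℝ≥0 := ⟨ε', εpos'.le⟩ with hε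
  have εpos : 0 < ε := NNReal.coe_pos.mp εpos'
  obtain ⟨_, ⟨f1, hf1, rfl⟩, h1⟩ := exists_lt_of_csInf_lt (rieszContentAux'_image_nonempty Λ K1)
    (lt_add_of_pos_right (rieszContentAux' Λ K1) (half_pos εpos))
  obtain ⟨_, ⟨f2, hf2, rfl⟩, h2⟩ := exists_lt_of_csInf_lt (rieszContentAux'_image_nonempty Λ K2)
    (lt_add_of_pos_right (rieszContentAux' Λ K2) (half_pos εpos))
  have key : rieszContentAux' Λ (K1 ⊔ K2) < rieszContentAux' Λ K1 + rieszContentAux' Λ K2 + ε := by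
    have hle : rieszContentAux' Λ (K1 ⊔ K2) ≤ Λ (f1 + f2) := by
      apply rieszContentAux'_le
      intro x hx
      show (1 : ℝ≥0) ≤ f1 x + f2 x
      rcases hx with h | h
      · exact (hf1 x h).trans le_self_add
      · exact (hf2 x h).trans le_add_self
    have hlt : Λ (f1 + f2) < (rieszContentAux' Λ K1 + ε / 2) + (rieszContentAux' Λ K2 + ε / 2) := by
      rw [map_add]
      exact add_lt_add h1 h2
    rw [add_add_add_comm, add_halves] at hlt
    exact hle.trans_lt hlt
  exact_mod_cast key

end OldRiesz

section Functional
variable {X : Type*} [TopologicalSpace X] [CompactSpace X] [T2Space X]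

/-- The `ℝ≥0`-valued positive linear functional associated to a positive linear
functional `ℓ` on real bounded continuous functions. -/
noncomputable def Lam (ℓ : (X →ᵇ ℝ) → ℝ)
    (hadd : ∀ f g, ℓ (f + g) = ℓ f + ℓ g)
    (hsmul : ∀ (c : ℝ) f, ℓ (c • f) = c * ℓ f)
    (hpos : ∀ f, (∀ x, 0 ≤ f x) → 0 ≤ ℓ f) : (X →ᵇ ℝ≥0) →ₗ[ℝ≥0] ℝ≥0 where
  toFun f := (ℓ (toR f)).toNNReal
  map_add' f g := by
    show (ℓ (toR (f + g))).toNNReal = (ℓ (toR f)).toNNReal + (ℓ (toR g)).toNNReal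
    rw [toR_add, hadd]
    exact Real.toNNReal_add (hpos _ (toR_nonneg f)) (hpos _ (toR_nonneg g))
  map_smul' c f := by
    show (ℓ (toR (c • f))).toNNReal = c • (ℓ (toR f)).toNNReal
    rw [toR_smul, hsmul, smul_eq_mul, Real.toNNReal_mul c.coe_nonneg, Real.toNNReal_coe]

variable (ℓ : (X →ᵇ ℝ) → ℝ)
    (hadd : ∀ f g, ℓ (f + g) = ℓ f + ℓ g)
    (hsmul : ∀ (c : ℝ) f, ℓ (c • f) = c * ℓ f)
    (hpos : ∀ f, (∀ x, 0 ≤ f x) → 0 ≤ ℓ f)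

lemma Lam_coe (f : X →ᵇ ℝ≥0) : ((Lam ℓ hadd hsmul hpos f : ℝ≥0) : ℝ) = ℓ (toR f) :=
  Real.coe_toNNReal _ (hpos _ (toR_nonneg f))

lemma Lam_mono {f g : X →ᵇ ℝ≥0} (h : ∀ x, f x ≤ g x) :
    Lam ℓ hadd hsmul hpos f ≤ Lam ℓ hadd hsmul hpos g := by
  set d : X →ᵇ ℝ≥0 := bcnn (fun x => g x - f x) (g.continuous.sub f.continuous) with hd
  have hfd : f + d = g := by
    ext x
    refine congrArg _ ?_
    rw [BoundedContinuousFunction.add_apply]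
    show f x + (g x - f x) = g x
    exact add_tsub_cancel_of_le (h x)
  calc Lam ℓ hadd hsmul hpos f ≤ Lam ℓ hadd hsmul hpos f + Lam ℓ hadd hsmul hpos d :=
        le_self_add
    _ = Lam ℓ hadd hsmul hpos g := by rw [← map_add, hfd]

lemma lam_top : rieszContentAux' (Lam ℓ hadd hsmul hpos) ⊤ = Lam ℓ hadd hsmul hpos 1 := by
  refine le_antisymm (rieszContentAux'_le _ (fun x _ => le_refl _)) ?_
  refine le_csInf (rieszContentAux'_image_nonempty _ _) ?_
  rintro b ⟨f, hf, rfl⟩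
  exact Lam_mono ℓ hadd hsmul hpos (fun x => hf x trivial)

/-- The content associated to the positive functional `ℓ`. -/
noncomputable def rContent : Content X where
  toFun := rieszContentAux' (Lam ℓ hadd hsmul hpos)
  mono' := fun K₁ K₂ h => rieszContentAux'_mono _ h
  sup_le' := fun K₁ K₂ => rieszContentAux'_sup_le _ K₁ K₂
  sup_disjoint' := by
    intro K₁ K₂ hdisj _ _
    refine le_antisymm (rieszContentAux'_sup_le _ K₁ K₂) ?_
    refine le_csInf (rieszContentAux'_image_nonempty _ _) ?_
    rintro b ⟨f, hf, rfl⟩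
    obtain ⟨w, hw0, hw1, hw01⟩ :=
      exists_continuous_zero_one_of_isCompact K₁.isCompact K₂.isCompact.isClosed hdisj
    set wn : X →ᵇ ℝ≥0 := bcnn (fun x => Real.toNNReal (w x))
      (continuous_real_toNNReal.comp w.continuous) with hwn
    have hwn1 : ∀ x, wn x ≤ 1 := by
      intro x
      simp only [hwn, bcnn_apply]
      exact Real.toNNReal_le_one.mpr (hw01 x).2
    set u : X →ᵇ ℝ≥0 := bcnn (fun x => f x * (1 - wn x))
      (f.continuous.mul (continuous_const.sub wn.continuous)) with hu
    set v : X →ᵇ ℝ≥0 := bcnn (fun x => f x * wn x) (f.continuous.mul wn.continuous) with hv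
    have huv : u + v = f := by
      ext x
      refine congrArg _ ?_
      rw [BoundedContinuousFunction.add_apply]
      show f x * (1 - wn x) + f x * wn x = f x
      rw [← mul_add, tsub_add_cancel_of_le (hwn1 x), mul_one]
    have hu1 : ∀ x ∈ K₁, (1 : ℝ≥0) ≤ u x := by
      intro x hx
      have hwx : wn x = 0 := by
        simp only [hwn, bcnn_apply]
        rw [hw0 hx]
        simp
      show (1 : ℝ≥0) ≤ f x * (1 - wn x)
      rw [hwx, tsub_zero, mul_one]
      exact hf x (Or.inl hx)
    have hv1 : ∀ x ∈ K₂, (1 : ℝ≥0) ≤ v x := by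
      intro x hx
      have hwx : wn x = 1 := by
        simp only [hwn, bcnn_apply]
        rw [hw1 hx]
        simp
      show (1 : ℝ≥0) ≤ f x * wn x
      rw [hwx, mul_one]
      exact hf x (Or.inr hx)
    calc rieszContentAux' (Lam ℓ hadd hsmul hpos) K₁ + rieszContentAux' (Lam ℓ hadd hsmul hpos) K₂
        ≤ Lam ℓ hadd hsmul hpos u + Lam ℓ hadd hsmul hpos v :=
          add_le_add (rieszContentAux'_le _ hu1) (rieszContentAux'_le _ hv1)
      _ = Lam ℓ hadd hsmul hpos f := by rw [← map_add, huv]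

end Functional

section Staircase

open Finset in
lemma stair_sum : ∀ (N : ℕ) (s : ℝ≥0), s ≤ N → ∑ k ∈ Finset.range N, min (s - (k : ℝ≥0)) 1 = s := by
  intro N
  induction N with
  | zero =>
    intro s hs
    have : s = 0 := le_antisymm (by exact_mod_cast hs) zero_le
    simp [this]
  | succ N ih =>
    intro s hs
    rw [Finset.sum_range_succ]
    by_cases h : s ≤ N
    · rw [ih s h, tsub_eq_zero_of_le (by exact_mod_cast h)]
      simp
    · push_neg at h
      have h1 : ∀ k ∈ Finset.range N, min (s - (k : ℝ≥0)) 1 = 1 := by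
        intro k hk
        have hk' : (k : ℝ≥0) + 1 ≤ s := by
          have hkN : (k : ℕ) + 1 ≤ N := Finset.mem_range.mp hk
          calc (k : ℝ≥0) + 1 ≤ (N : ℝ≥0) := by exact_mod_cast hkN
            _ ≤ s := h.le
        exact min_eq_right (le_tsub_of_add_le_left hk')
      rw [Finset.sum_congr rfl h1]
      simp only [Finset.sum_const, Finset.card_range, nsmul_eq_mul, mul_one]
      have hs1 : s - (N : ℝ≥0) ≤ 1 := by
        rw [tsub_le_iff_left]
        exact_mod_cast hs
      rw [min_eq_left hs1]
      exact add_tsub_cancel_of_le h.le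

lemma stair_count : ∀ (N : ℕ) (s : ℝ≥0), s ≤ N →
    (s : ENNReal) ≤ 1 + ∑ k ∈ Finset.range N, (if ((k : ℝ≥0) + 1 < s) then (1 : ENNReal) else 0) := by
  intro N
  induction N with
  | zero =>
    intro s hs
    have : s = 0 := le_antisymm (by exact_mod_cast hs) zero_le
    simp [this]
  | succ N ih =>
    intro s hs
    by_cases h : s ≤ N
    · calc (s : ENNReal) ≤ 1 + ∑ k ∈ Finset.range N, (if ((k : ℝ≥0) + 1 < s) then (1 : ENNReal) else 0) :=
          ih s h
        _ ≤ 1 + ∑ k ∈ Finset.range (N + 1), (if ((k : ℝ≥0) + 1 < s) then (1 : ENNReal) else 0) := by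
          exact add_le_add le_rfl
            (Finset.sum_le_sum_of_subset (Finset.range_subset_range.mpr (Nat.le_succ N)))
    · push_neg at h
      have h1 : ∀ k ∈ Finset.range N, (if ((k : ℝ≥0) + 1 < s) then (1 : ENNReal) else 0) = 1 := by
        intro k hk
        have hkN : (k : ℕ) + 1 ≤ N := Finset.mem_range.mp hk
        have : (k : ℝ≥0) + 1 < s := lt_of_le_of_lt (by exact_mod_cast hkN) h
        simp [this]
      calc (s : ENNReal) ≤ ((N : ℝ≥0) : ENNReal) + 1 := by
            rw [← ENNReal.coe_one, ← ENNReal.coe_add]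
            exact_mod_cast hs
        _ = 1 + ∑ k ∈ Finset.range N, (if ((k : ℝ≥0) + 1 < s) then (1 : ENNReal) else 0) := by
            rw [Finset.sum_congr rfl h1]
            simp [add_comm]
        _ ≤ 1 + ∑ k ∈ Finset.range (N + 1), (if ((k : ℝ≥0) + 1 < s) then (1 : ENNReal) else 0) := by
            exact add_le_add le_rfl
              (Finset.sum_le_sum_of_subset (Finset.range_subset_range.mpr (Nat.le_succ N)))

end Staircase

section Main
variable {X : Type*} [TopologicalSpace X] [CompactSpace X] [T2Space X]
  [MeasurableSpace X] [BorelSpace X]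
variable (ℓ : (X →ᵇ ℝ) → ℝ)
    (hadd : ∀ f g, ℓ (f + g) = ℓ f + ℓ g)
    (hsmul : ∀ (c : ℝ) f, ℓ (c • f) = c * ℓ f)
    (hpos : ∀ f, (∀ x, 0 ≤ f x) → 0 ≤ ℓ f)

lemma rMeasure_univ :
    (rContent ℓ hadd hsmul hpos).measure Set.univ
      = ((Lam ℓ hadd hsmul hpos 1 : ℝ≥0) : ENNReal) := by
  set C := rContent ℓ hadd hsmul hpos
  rw [C.measure_apply MeasurableSet.univ, C.outerMeasure_of_isOpen Set.univ isOpen_univ]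
  have h1 : C.innerContent ⟨Set.univ, isOpen_univ⟩ ≤ C ⊤ :=
    C.innerContent_le _ _ (by simp)
  have h2 : C ⊤ ≤ C.innerContent ⟨Set.univ, isOpen_univ⟩ :=
    C.le_innerContent _ _ (by simp)
  have : C.innerContent ⟨Set.univ, isOpen_univ⟩ = C ⊤ := le_antisymm h1 h2
  rw [this]
  show ((C.toFun ⊤ : ℝ≥0) : ENNReal) = _
  have : C.toFun ⊤ = Lam ℓ hadd hsmul hpos 1 := lam_top ℓ hadd hsmul hpos
  rw [this]

lemma rMeasure_finite : IsFiniteMeasure (rContent ℓ hadd hsmul hpos).measure := by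
  constructor
  rw [rMeasure_univ]
  exact ENNReal.coe_lt_top

lemma rMeasure_open_le {U : Set X} (hU : IsOpen U) (K : Compacts X) (hUK : U ⊆ K) :
    (rContent ℓ hadd hsmul hpos).measure U
      ≤ ((rieszContentAux' (Lam ℓ hadd hsmul hpos) K : ℝ≥0) : ENNReal) := by
  set C := rContent ℓ hadd hsmul hpos
  rw [C.measure_apply hU.measurableSet, C.outerMeasure_of_isOpen U hU]
  exact C.innerContent_le ⟨U, hU⟩ K hUK

lemma rMeasure_lintegral_le (f : X →ᵇ ℝ≥0) :
    ∫⁻ x, (f x : ENNReal) ∂(rContent ℓ hadd hsmul hpos).measure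
      ≤ ((Lam ℓ hadd hsmul hpos f : ℝ≥0) : ENNReal) := by
  classical
  set Λ := Lam ℓ hadd hsmul hpos with hΛ
  set C := rContent ℓ hadd hsmul hpos with hC
  set μ := C.measure with hμ
  haveI : IsFiniteMeasure μ := rMeasure_finite ℓ hadd hsmul hpos
  -- the main estimate for each positive natural m
  have main : ∀ m : ℕ, 0 < m →
      (m : ENNReal) * ∫⁻ x, (f x : ENNReal) ∂μ
        ≤ ((Λ 1 : ℝ≥0) : ENNReal) + (m : ENNReal) * ((Λ f : ℝ≥0) : ENNReal) := by
    intro m hm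
    set N : ℕ := ⌈(m : ℝ) * ‖toR f‖⌉₊ with hN
    have hNbound : ∀ x, (m : ℝ≥0) * f x ≤ (N : ℝ≥0) := by
      intro x
      rw [← NNReal.coe_le_coe]
      push_cast
      calc (m : ℝ) * (f x : ℝ) ≤ (m : ℝ) * ‖toR f‖ := by
            apply mul_le_mul_of_nonneg_left _ (by positivity)
            calc (f x : ℝ) = ‖toR f x‖ := by
                  rw [toR_apply, Real.norm_eq_abs, abs_of_nonneg (f x).coe_nonneg]
              _ ≤ ‖toR f‖ := (toR f).norm_coe_le_norm x
        _ ≤ (N : ℝ) := Nat.le_ceil _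
    -- compact upper level sets and open strict level sets
    have hScl : ∀ j : ℕ, IsClosed {x : X | (j : ℝ≥0) ≤ (m : ℝ≥0) * f x} := fun j =>
      isClosed_le continuous_const (continuous_const.mul f.continuous)
    set Sc : ℕ → Compacts X := fun j => ⟨{x : X | (j : ℝ≥0) ≤ (m : ℝ≥0) * f x},
      (hScl j).isCompact⟩ with hSc
    set O : ℕ → Set X := fun j => {x : X | (j : ℝ≥0) < (m : ℝ≥0) * f x} with hO
    have hOopen : ∀ j, IsOpen (O j) := fun j =>
      isOpen_lt continuous_const (continuous_const.mul f.continuous)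
    -- the test functions
    set h : ℕ → (X →ᵇ ℝ≥0) := fun k => bcnn (fun x => min ((m : ℝ≥0) * f x - (k : ℝ≥0)) 1)
      (((continuous_const.mul f.continuous).sub continuous_const).min continuous_const) with hh
    -- sum of the test functions
    have hsum : ∑ k ∈ Finset.range N, h k = (m : ℝ≥0) • f := by
      ext x
      refine congrArg _ ?_
      simp only [BoundedContinuousFunction.coe_sum, Finset.sum_apply,
        BoundedContinuousFunction.coe_smul]
      show ∑ k ∈ Finset.range N, min ((m : ℝ≥0) * f x - (k : ℝ≥0)) 1 = (m : ℝ≥0) • f x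
      rw [smul_eq_mul]
      exact stair_sum N ((m : ℝ≥0) * f x) (hNbound x)
    -- content of the level sets is controlled by the test functions
    have key2 : ∀ k : ℕ, rieszContentAux' Λ (Sc (k + 1)) ≤ Λ (h k) := by
      intro k
      apply rieszContentAux'_le
      intro x hx
      have hx' : ((k : ℕ) + 1 : ℝ≥0) ≤ (m : ℝ≥0) * f x := by
        have := hx
        simp only [hSc, Compacts.coe_mk, Set.mem_setOf_eq] at this
        push_cast at this ⊢
        exact this
      show (1 : ℝ≥0) ≤ min ((m : ℝ≥0) * f x - (k : ℝ≥0)) 1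
      refine le_min (le_tsub_of_add_le_left ?_) le_rfl
      exact hx'
    -- summing up the contents
    have key2' : ∑ k ∈ Finset.range N, ((rieszContentAux' Λ (Sc (k + 1)) : ℝ≥0) : ENNReal)
        ≤ (m : ENNReal) * ((Λ f : ℝ≥0) : ENNReal) := by
      rw [← ENNReal.coe_finset_sum]
      have : ∑ k ∈ Finset.range N, rieszContentAux' Λ (Sc (k + 1)) ≤ (m : ℝ≥0) * Λ f := by
        calc ∑ k ∈ Finset.range N, rieszContentAux' Λ (Sc (k + 1))
            ≤ ∑ k ∈ Finset.range N, Λ (h k) := Finset.sum_le_sum (fun k _ => key2 k)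
          _ = Λ (∑ k ∈ Finset.range N, h k) := (map_sum Λ _ _).symm
          _ = Λ ((m : ℝ≥0) • f) := by rw [hsum]
          _ = (m : ℝ≥0) * Λ f := by rw [_root_.map_smul, smul_eq_mul]
      calc ((∑ k ∈ Finset.range N, rieszContentAux' Λ (Sc (k + 1)) : ℝ≥0) : ENNReal)
          ≤ (((m : ℝ≥0) * Λ f : ℝ≥0) : ENNReal) := ENNReal.coe_le_coe.mpr this
        _ = (m : ENNReal) * ((Λ f : ℝ≥0) : ENNReal) := by push_cast; ring
    -- pointwise staircase bound
    have key3 : ∀ x : X, ((((m : ℝ≥0) * f x : ℝ≥0)) : ENNReal)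
        ≤ 1 + ∑ k ∈ Finset.range N, (O (k + 1)).indicator (fun _ => (1 : ENNReal)) x := by
      intro x
      have := stair_count N ((m : ℝ≥0) * f x) (hNbound x)
      refine this.trans (le_of_eq ?_)
      congr 1
      apply Finset.sum_congr rfl
      intro k _
      rw [Set.indicator_apply]
      have hmem : x ∈ O (k + 1) ↔ ((k : ℝ≥0) + 1 < (m : ℝ≥0) * f x) := by
        simp only [hO, Set.mem_setOf_eq]
        push_cast
        rfl
      by_cases hx : (k : ℝ≥0) + 1 < (m : ℝ≥0) * f x
      · rw [if_pos hx, if_pos (hmem.mpr hx)]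
      · rw [if_neg hx, if_neg (fun hmm => hx (hmem.mp hmm))]
    -- integrating the staircase bound
    have hmeas : Measurable fun x => (f x : ENNReal) := f.measurable_coe_ennreal_comp
    calc (m : ENNReal) * ∫⁻ x, (f x : ENNReal) ∂μ
        = ∫⁻ x, (((m : ℝ≥0) * f x : ℝ≥0) : ENNReal) ∂μ := by
          rw [← lintegral_const_mul _ hmeas]
          apply lintegral_congr
          intro x
          push_cast
          ring
      _ ≤ ∫⁻ x, (1 + ∑ k ∈ Finset.range N, (O (k + 1)).indicator (fun _ => (1 : ENNReal)) x) ∂μ :=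
          lintegral_mono key3
      _ = μ Set.univ + ∑ k ∈ Finset.range N, μ (O (k + 1)) := by
          rw [lintegral_add_left measurable_const, lintegral_one,
            lintegral_finset_sum _ (fun k _ =>
              measurable_const.indicator (hOopen (k+1)).measurableSet)]
          congr 1
          exact Finset.sum_congr rfl
            (fun k _ => lintegral_indicator_one (hOopen (k+1)).measurableSet)
      _ ≤ ((Λ 1 : ℝ≥0) : ENNReal) + (m : ENNReal) * ((Λ f : ℝ≥0) : ENNReal) := by
          apply add_le_add
          · exact le_of_eq (rMeasure_univ ℓ hadd hsmul hpos)
          · refine le_trans (Finset.sum_le_sum (fun k _ => ?_)) key2'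
            refine rMeasure_open_le ℓ hadd hsmul hpos (hOopen (k+1)) (Sc (k+1)) ?_
            intro x hx
            simp only [hO, Set.mem_setOf_eq] at hx
            simp only [hSc, Compacts.coe_mk, Set.mem_setOf_eq]
            exact hx.le
  -- pass to the limit in m
  have hfin : ∫⁻ x, (f x : ENNReal) ∂μ ≠ ⊤ := (BoundedContinuousFunction.lintegral_lt_top_of_nnreal μ f).ne
  by_contra hcon
  push_neg at hcon
  set A := ∫⁻ x, (f x : ENNReal) ∂μ with hA
  set B := ((Λ f : ℝ≥0) : ENNReal) with hB
  set c := ((Λ 1 : ℝ≥0) : ENNReal) with hc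
  have hreal : ∀ m : ℕ, 0 < m → (m : ℝ) * A.toReal ≤ c.toReal + (m : ℝ) * B.toReal := by
    intro m hm
    have h1 := main m hm
    have h2 := ENNReal.toReal_mono (by finiteness) h1
    rw [ENNReal.toReal_mul, ENNReal.toReal_add (by finiteness) (by finiteness),
      ENNReal.toReal_mul] at h2
    simpa using h2
  have hAB : A.toReal ≤ B.toReal := by
    apply le_of_forall_pos_le_add
    intro ε hε
    obtain ⟨m, hm⟩ := exists_nat_gt (c.toReal / ε)
    have hm0 : 0 < m := by
      by_contra hm0
      push_neg at hm0
      interval_cases m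
      simp only [Nat.cast_zero] at hm
      have : 0 ≤ c.toReal / ε := div_nonneg ENNReal.toReal_nonneg hε.le
      linarith
    have h1 := hreal m hm0
    have h2 : c.toReal ≤ (m : ℝ) * ε := by
      rw [div_lt_iff₀ hε] at hm
      nlinarith
    have hmpos : (0 : ℝ) < m := by exact_mod_cast hm0
    nlinarith
  exact absurd ((ENNReal.toReal_le_toReal hfin (by finiteness)).mp hAB) (not_le.mpr hcon)

lemma rMeasure_integral_le_nn (f : X →ᵇ ℝ≥0) :
    ∫ x, (f x : ℝ) ∂(rContent ℓ hadd hsmul hpos).measure ≤ ℓ (toR f) := by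
  set μ := (rContent ℓ hadd hsmul hpos).measure with hμ
  haveI : IsFiniteMeasure μ := rMeasure_finite ℓ hadd hsmul hpos
  rw [← BoundedContinuousFunction.toReal_lintegral_coe_eq_integral f μ]
  have h := rMeasure_lintegral_le ℓ hadd hsmul hpos f
  have h2 := ENNReal.toReal_mono (by finiteness) h
  rw [ENNReal.coe_toReal] at h2
  exact h2.trans_eq (Lam_coe ℓ hadd hsmul hpos f)

lemma rMeasure_integral_le (f : X →ᵇ ℝ) :
    ∫ x, f x ∂(rContent ℓ hadd hsmul hpos).measure ≤ ℓ f := by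
  set μ := (rContent ℓ hadd hsmul hpos).measure with hμ
  haveI : IsFiniteMeasure μ := rMeasure_finite ℓ hadd hsmul hpos
  set fnn := (f + BoundedContinuousFunction.const X ‖f‖).nnrealPart with hfnn
  have hnonneg : ∀ x, 0 ≤ f x + ‖f‖ := by
    intro x
    have := neg_le_of_abs_le (f.norm_coe_le_norm x)
    have h2 := neg_abs_le (f x)
    have h3 : |f x| ≤ ‖f‖ := by
      have := f.norm_coe_le_norm x
      rwa [Real.norm_eq_abs] at this
    linarith [neg_abs_le (f x)]
  have htoRx : ∀ x, (fnn x : ℝ) = f x + ‖f‖ := by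
    intro x
    show ((Real.toNNReal ((f + BoundedContinuousFunction.const X ‖f‖) x)) : ℝ) = f x + ‖f‖
    rw [BoundedContinuousFunction.add_apply, BoundedContinuousFunction.const_apply]
    exact Real.coe_toNNReal _ (hnonneg x)
  have htoR : toR fnn = f + BoundedContinuousFunction.const X ‖f‖ := by
    ext x
    rw [toR_apply, htoRx x, BoundedContinuousFunction.add_apply,
      BoundedContinuousFunction.const_apply]
  have hmass : (μ Set.univ).toReal = ℓ 1 := by
    rw [hμ, rMeasure_univ ℓ hadd hsmul hpos, ENNReal.coe_toReal]
    have := Lam_coe ℓ hadd hsmul hpos 1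
    rwa [toR_one] at this
  have hint : ∫ x, (fnn x : ℝ) ∂μ ≤ ℓ (toR fnn) := rMeasure_integral_le_nn ℓ hadd hsmul hpos fnn
  have heq1 : ∫ x, (fnn x : ℝ) ∂μ = ∫ x, f x ∂μ + (μ Set.univ).toReal • ‖f‖ := by
    rw [← measureReal_def, ← BoundedContinuousFunction.integral_add_const f ‖f‖]
    exact integral_congr_ae (Filter.Eventually.of_forall (fun x => htoRx x))
  have heq2 : ℓ (toR fnn) = ℓ f + ‖f‖ * ℓ 1 := by
    rw [htoR, hadd]
    congr 1
    have hconst : BoundedContinuousFunction.const X ‖f‖ = ‖f‖ • (1 : X →ᵇ ℝ) := by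
      ext x
      simp
    rw [hconst, hsmul]
  rw [heq1] at hint
  rw [heq2, hmass] at hint
  rw [smul_eq_mul] at hint
  linarith

include hadd hsmul hpos in
theorem exists_rep_measure :
    ∃ μ : Measure X, IsFiniteMeasure μ ∧ μ.InnerRegular ∧
      ∀ f : X →ᵇ ℝ, ∫ x, f x ∂μ ≤ ℓ f := by
  haveI : IsFiniteMeasure (rContent ℓ hadd hsmul hpos).measure :=
    rMeasure_finite ℓ hadd hsmul hpos
  exact ⟨(rContent ℓ hadd hsmul hpos).measure, inferInstance, inferInstance,
    fun f => rMeasure_integral_le ℓ hadd hsmul hpos f⟩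

end Main

/-- `Wt M` is the set `W = {(x,y) ∈ M × M : x ≠ y}`, a topological subspace of `M × M`. -/
abbrev Wt (M : Type*) [MetricSpace M] := {p : M × M // p.1 ≠ p.2}

/-- `g : W → ℝ` satisfies the G-inequality. -/
def GIneq {M : Type*} [MetricSpace M] (g : Wt M → ℝ) : Prop :=
  ∀ (x u y : M) (hxu : x ≠ u) (huy : u ≠ y) (hxy : x ≠ y),
    dist x y * g ⟨(x, y), hxy⟩ ≤ dist x u * g ⟨(x, u), hxu⟩ + dist u y * g ⟨(u, y), huy⟩

/-- The cone `G` of continuous functions on `K = βW` satisfying the G-inequality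
on points of `W`. -/
def GSet (M : Type*) [MetricSpace M] : Set (StoneCech (Wt M) → ℝ) :=
  {g | Continuous g ∧ GIneq fun p => g (stoneCechUnit p)}

/-- The Choquet-like quasi-order `μ ≼ ν`. -/
def Preceq {M : Type*} [MetricSpace M] [MeasurableSpace (StoneCech (Wt M))]
    (μ ν : Measure (StoneCech (Wt M))) : Prop :=
  ∀ g ∈ GSet M, ∫ ζ, g ζ ∂μ ≤ ∫ ζ, g ζ ∂ν

/-- `μ` is `≼`-minimal among finite positive Radon Borel measures. -/
def IsMinimal {M : Type*} [MetricSpace M] [MeasurableSpace (StoneCech (Wt M))]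
    (μ : Measure (StoneCech (Wt M))) : Prop :=
  ∀ ν : Measure (StoneCech (Wt M)),
    IsFiniteMeasure ν → ν.InnerRegular → Preceq ν μ → Preceq μ ν



section Stmt13
open Filter
variable {M : Type*} [MetricSpace M] [MeasurableSpace (StoneCech (Wt M))]
  [BorelSpace (StoneCech (Wt M))]

lemma one_mem_GSet : (fun _ : StoneCech (Wt M) => (1 : ℝ)) ∈ GSet M := by
  refine ⟨continuous_const, ?_⟩
  intro x u y hxu huy hxy
  simpa using dist_triangle x u y

lemma Preceq.refl' (μ : Measure (StoneCech (Wt M))) : Preceq μ μ := fun _ _ => le_rfl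

lemma Preceq.trans' {μ ρ σ : Measure (StoneCech (Wt M))} (h1 : Preceq μ ρ) (h2 : Preceq ρ σ) :
    Preceq μ σ := fun g hg => (h1 g hg).trans (h2 g hg)

lemma Preceq.mass_le {μ ρ : Measure (StoneCech (Wt M))} (h : Preceq μ ρ) :
    (μ Set.univ).toReal ≤ (ρ Set.univ).toReal := by
  have := h _ one_mem_GSet
  simpa [integral_const, measureReal_def] using this

end Stmt13

theorem stmt13 {M : Type*} [MetricSpace M]
    [MeasurableSpace (StoneCech (Wt M))] [BorelSpace (StoneCech (Wt M))]
    (h3 : ∃ x y z : M, x ≠ y ∧ x ≠ z ∧ y ≠ z)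
    (ν : Measure (StoneCech (Wt M))) [IsFiniteMeasure ν] [ν.InnerRegular] :
    ∃ μ : Measure (StoneCech (Wt M)),
      IsFiniteMeasure μ ∧ μ.InnerRegular ∧ IsMinimal μ ∧ Preceq μ ν := by
  classical
  let P : Measure (StoneCech (Wt M)) → Prop :=
    fun μ => IsFiniteMeasure μ ∧ μ.InnerRegular ∧ Preceq μ ν
  let α := {μ : Measure (StoneCech (Wt M)) // P μ}
  let r : α → α → Prop := fun a b => Preceq b.1 a.1
  have htrans : ∀ {a b d : α}, r a b → r b d → r a d := by
    intro a b d hab hbd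
    exact Preceq.trans' hbd hab
  -- every r-chain has an upper bound (i.e. a ≼-lower bound)
  have hchains : ∀ c : Set α, IsChain r c → ∃ ub : α, ∀ a ∈ c, r a ub := by
    intro c hc
    rcases c.eq_empty_or_nonempty with hce | hne
    · refine ⟨⟨ν, inferInstance, inferInstance, Preceq.refl' ν⟩, ?_⟩
      intro a ha
      rw [hce] at ha
      exact absurd ha (Set.notMem_empty a)
    · obtain ⟨a₀, ha₀⟩ := hne
      -- the tail sets of the chain
      let T : α → Set α := fun a => {b | b ∈ c ∧ Preceq b.1 a.1}
      have hTself : ∀ a ∈ c, a ∈ T a := fun a ha => ⟨ha, Preceq.refl' a.1⟩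
      haveI : Nonempty c := ⟨⟨a₀, ha₀⟩⟩
      -- the tail filter
      let F : Filter α := ⨅ a : c, Filter.principal (T a.1)
      have hdir : Directed (· ≥ ·) (fun a : c => Filter.principal (T a.1)) := by
        intro a b
        rcases eq_or_ne (a : α) (b : α) with heq | hne'
        · refine ⟨a, le_refl _, ?_⟩
          show Filter.principal (T a.1) ≤ Filter.principal (T b.1)
          rw [heq]
        · rcases hc a.2 b.2 hne' with hab | hba
          · refine ⟨b, ?_, le_refl _⟩
            show Filter.principal (T b.1) ≤ Filter.principal (T a.1)
            rw [Filter.le_principal_iff, Filter.mem_principal]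
            intro x hx
            exact ⟨hx.1, Preceq.trans' hx.2 hab⟩
          · refine ⟨a, le_refl _, ?_⟩
            show Filter.principal (T a.1) ≤ Filter.principal (T b.1)
            rw [Filter.le_principal_iff, Filter.mem_principal]
            intro x hx
            exact ⟨hx.1, Preceq.trans' hx.2 hba⟩
      haveI : Nonempty α := ⟨a₀⟩
      haveI hFne : F.NeBot := by
        apply Filter.iInf_neBot_of_directed hdir
        intro a
        rw [Filter.principal_neBot_iff]
        exact ⟨a.1, hTself a.1 a.2⟩
      let U : Ultrafilter α := Ultrafilter.of F
      have hU : (U : Filter α) ≤ F := Ultrafilter.of_le F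
      have hTmem : ∀ a : c, T a.1 ∈ U := by
        intro a
        apply hU
        exact Filter.mem_iInf_of_mem a (Filter.mem_principal_self _)
      -- the net of integrals
      let Φ : (StoneCech (Wt M) →ᵇ ℝ) → α → ℝ := fun f b => ∫ x, f x ∂b.1
      have hmassν : ∀ b : α, (b.1 Set.univ).toReal ≤ (ν Set.univ).toReal := fun b =>
        Preceq.mass_le b.2.2.2
      have hbound : ∀ (f : StoneCech (Wt M) →ᵇ ℝ) (b : α),
          |Φ f b| ≤ ‖f‖ * (ν Set.univ).toReal := by
        intro f b
        haveI : IsFiniteMeasure b.1 := b.2.1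
        have h1 : ‖∫ x, f x ∂b.1‖ ≤ (b.1 Set.univ).toReal * ‖f‖ :=
          BoundedContinuousFunction.norm_integral_le_mul_norm b.1 f
        rw [Real.norm_eq_abs] at h1
        calc |Φ f b| ≤ (b.1 Set.univ).toReal * ‖f‖ := h1
          _ ≤ (ν Set.univ).toReal * ‖f‖ :=
            mul_le_mul_of_nonneg_right (hmassν b) (norm_nonneg f)
          _ = ‖f‖ * (ν Set.univ).toReal := mul_comm _ _
      have hlim : ∀ f : StoneCech (Wt M) →ᵇ ℝ,
          ∃ L : ℝ, Filter.Tendsto (Φ f) (U : Filter α) (nhds L) := by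
        intro f
        have hmem : Set.Icc (-(‖f‖ * (ν Set.univ).toReal)) (‖f‖ * (ν Set.univ).toReal)
            ∈ (U.map (Φ f) : Filter ℝ) := by
          rw [Ultrafilter.coe_map, Filter.mem_map]
          apply Filter.univ_mem'
          intro b
          have := abs_le.mp (hbound f b)
          exact ⟨this.1, this.2⟩
        obtain ⟨x, _, hx⟩ := isCompact_Icc.ultrafilter_le_nhds (U.map (Φ f))
          (Filter.le_principal_iff.mpr hmem)
        refine ⟨x, ?_⟩
        rwa [Filter.Tendsto, ← Ultrafilter.coe_map]
      choose L hL using hlim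
      -- `L` is a positive linear functional
      have hint : ∀ (f : StoneCech (Wt M) →ᵇ ℝ) (b : α), Integrable f b.1 := by
        intro f b
        haveI : IsFiniteMeasure b.1 := b.2.1
        exact f.integrable b.1
      have hadd : ∀ f g : StoneCech (Wt M) →ᵇ ℝ, L (f + g) = L f + L g := by
        intro f g
        refine tendsto_nhds_unique (hL (f + g)) ?_
        have hfun : Φ (f + g) = fun b => Φ f b + Φ g b := by
          funext b
          show ∫ x, (f + g) x ∂b.1 = _
          simp only [BoundedContinuousFunction.coe_add, Pi.add_apply]
          exact integral_add (hint f b) (hint g b)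
        rw [hfun]
        exact ((hL f).add (hL g))
      have hsmul : ∀ (c' : ℝ) (f : StoneCech (Wt M) →ᵇ ℝ), L (c' • f) = c' * L f := by
        intro c' f
        refine tendsto_nhds_unique (hL (c' • f)) ?_
        have hfun : Φ (c' • f) = fun b => c' * Φ f b := by
          funext b
          show ∫ x, (c' • f) x ∂b.1 = _
          simp only [BoundedContinuousFunction.coe_smul, Pi.smul_apply, smul_eq_mul]
          rw [integral_const_mul]
        rw [hfun]
        exact (hL f).const_mul c'
      have hpos : ∀ f : StoneCech (Wt M) →ᵇ ℝ, (∀ x, 0 ≤ f x) → 0 ≤ L f := by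
        intro f hf
        refine ge_of_tendsto (hL f) (Filter.Eventually.of_forall ?_)
        intro b
        exact integral_nonneg hf
      -- `L` of a `G`-function is dominated by integrals along the chain
      have hLG : ∀ (g : StoneCech (Wt M) → ℝ) (hg : g ∈ GSet M), ∀ a ∈ c,
          L (BoundedContinuousFunction.mkOfCompact ⟨g, hg.1⟩)
            ≤ ∫ ζ, g ζ ∂a.1 := by
        intro g hg a ha
        refine le_of_tendsto (hL _) ?_
        refine Filter.eventually_of_mem (hTmem ⟨a, ha⟩) ?_
        intro b hb
        exact hb.2 g hg
      -- the limit measure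
      obtain ⟨μlim, hμfin, hμreg, hμrep⟩ := exists_rep_measure L hadd hsmul hpos
      have hPre : ∀ a ∈ c, Preceq μlim a.1 := by
        intro a ha g hg
        have h1 : ∫ ζ, g ζ ∂μlim
            = ∫ x, (BoundedContinuousFunction.mkOfCompact ⟨g, hg.1⟩) x ∂μlim := rfl
        rw [h1]
        exact (hμrep _).trans (hLG g hg a ha)
      refine ⟨⟨μlim, hμfin, hμreg, Preceq.trans' (hPre a₀ ha₀) a₀.2.2.2⟩, ?_⟩
      intro a ha
      exact hPre a ha
  obtain ⟨m, hm⟩ := exists_maximal_of_chains_bounded hchains (fun {a b d} => htrans)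
  refine ⟨m.1, m.2.1, m.2.2.1, ?_, m.2.2.2⟩
  intro ν' hfin' hreg' hpre'
  exact hm ⟨ν', hfin', hreg', Preceq.trans' hpre' m.2.2.2⟩ hpre'
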